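/- The normalization Z is differentiable on [0,∞) and for every t ≥ 0, Z'(t)/Z(t) = −(1/2) Tr( Cov_{μ_t} Aᵀ Γ^{-1} A ) − (1/2) (u† − E_{μ_t})ᵀ Aᵀ Γ^{-1} A (u† − E_{μ_t}). -/

import Mathlib

open MeasureTheory Real Set Matrix

noncomputable section

/-- Mean vector `E_ρ = ∫ u ρ(u) du` of a probability density `ρ` on `ℝ^L`. -/
def densMean (L : ℕ) (ρ : (Fin L → ℝ) → ℝ) : Fin L → ℝ :=
  fun i => ∫ u : Fin L → ℝ, u i * ρ u

/-- Covariance matrix `Cov_ρ = ∫ (u − E_ρ)(u − E_ρ)ᵀ ρ(u) du`. -/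
def densCov (L : ℕ) (ρ : (Fin L → ℝ) → ℝ) : Matrix (Fin L) (Fin L) ℝ :=
  Matrix.of fun i j =>
    ∫ u : Fin L → ℝ, (u i - densMean L ρ i) * (u j - densMean L ρ j) * ρ u

/-- The Gaussian density on `ℝ^L` with mean `m` and covariance matrix `S`. -/
def gaussDensity (L : ℕ) (m : Fin L → ℝ) (S : Matrix (Fin L) (Fin L) ℝ)
    (u : Fin L → ℝ) : ℝ :=
  (2 * π) ^ (-(L : ℝ) / 2) * S.det ^ (-(1 : ℝ) / 2) *
    Real.exp (-(1 / 2) *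
      dotProduct (fun i => u i - m i) (S⁻¹.mulVec (fun i => u i - m i)))

/-- The loss `Φ(u) = ½ (u† − u)ᵀ Aᵀ Γ⁻¹ A (u† − u)` (with data `y = A u†`). -/
def lossPhi (K L : ℕ) (A : Matrix (Fin K) (Fin L) ℝ) (Γ : Matrix (Fin K) (Fin K) ℝ)
    (udag : Fin L → ℝ) (u : Fin L → ℝ) : ℝ :=
  (1 / 2) * dotProduct (fun i => udag i - u i)
    ((Aᵀ * Γ⁻¹ * A).mulVec (fun i => udag i - u i))

/-- The normalization `Z(t) = ∫ exp(−t Φ(u)) μ₀(u) du`, where `μ₀` is the Gaussian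
density with mean `u₀` and covariance `Γ₀`. -/
def ekiZ (K L : ℕ) (A : Matrix (Fin K) (Fin L) ℝ) (Γ : Matrix (Fin K) (Fin K) ℝ)
    (Γ₀ : Matrix (Fin L) (Fin L) ℝ) (u₀ udag : Fin L → ℝ) (t : ℝ) : ℝ :=
  ∫ u : Fin L → ℝ, Real.exp (-t * lossPhi K L A Γ udag u) * gaussDensity L u₀ Γ₀ u

/-- The interpolating density `μ(t,u) = exp(−t Φ(u)) μ₀(u) / Z(t)`. -/
def ekiMu (K L : ℕ) (A : Matrix (Fin K) (Fin L) ℝ) (Γ : Matrix (Fin K) (Fin K) ℝ)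
    (Γ₀ : Matrix (Fin L) (Fin L) ℝ) (u₀ udag : Fin L → ℝ) (t : ℝ)
    (u : Fin L → ℝ) : ℝ :=
  Real.exp (-t * lossPhi K L A Γ udag u) * gaussDensity L u₀ Γ₀ u
    / ekiZ K L A Γ Γ₀ u₀ udag t



private lemma aux_one_add_sum_le_prod {ι : Type*} (s : Finset ι) (f : ι → ℝ) :
    (∀ i ∈ s, 0 ≤ f i) → 1 + ∑ i ∈ s, f i ≤ ∏ i ∈ s, (1 + f i) := by
  classical
  induction s using Finset.induction_on with
  | empty => simp
  | @insert a s ha ih =>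
    intro hf
    rw [Finset.sum_insert ha, Finset.prod_insert ha]
    have h1 : 0 ≤ f a := hf a (Finset.mem_insert_self a s)
    have h2 : ∀ i ∈ s, 0 ≤ f i := fun i hi => hf i (Finset.mem_insert_of_mem hi)
    have h3 := ih h2
    have h4 : 0 ≤ ∑ i ∈ s, f i := Finset.sum_nonneg h2
    nlinarith

private lemma aux_integrable_prod {L : ℕ} {c : ℝ} (hc : 0 < c) :
    Integrable (fun u : Fin L → ℝ => ∏ i, ((1 + (u i)^2) * Real.exp (-c * (u i)^2))) := by
  apply Integrable.fintype_prod (f := fun (_ : Fin L) (x : ℝ) => (1 + x^2) * Real.exp (-c * x^2))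
  intro i
  have h1 : Integrable (fun x : ℝ => Real.exp (-c * x^2)) := integrable_exp_neg_mul_sq hc
  have h2 : Integrable (fun x : ℝ => x^2 * Real.exp (-c * x^2)) := by
    have h := integrable_rpow_mul_exp_neg_mul_sq hc (s := 2) (by norm_num)
    have : (fun x : ℝ => x ^ (2:ℝ) * Real.exp (-c * x^2)) = fun x : ℝ => x^2 * Real.exp (-c * x^2) := by
      ext x
      rw [show (2:ℝ) = ((2:ℕ):ℝ) by norm_num, Real.rpow_natCast]
    rwa [this] at h
  have heq : (fun x : ℝ => (1 + x^2) * Real.exp (-c * x^2))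
      = (fun x : ℝ => Real.exp (-c * x^2)) + fun x : ℝ => x^2 * Real.exp (-c * x^2) := by
    ext x; simp [add_mul]
  rw [heq]; exact h1.add h2

private lemma aux_norm_sq_le_sum {L : ℕ} (u : Fin L → ℝ) : ‖u‖^2 ≤ ∑ i, (u i)^2 := by
  have hs : 0 ≤ ∑ i, (u i)^2 := by positivity
  have h1 : ‖u‖ ≤ Real.sqrt (∑ i, (u i)^2) := by
    apply pi_norm_le_iff_of_nonneg (Real.sqrt_nonneg _) |>.2
    intro i
    rw [Real.norm_eq_abs, ← Real.sqrt_sq_eq_abs]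
    exact Real.sqrt_le_sqrt (Finset.single_le_sum (f := fun j => (u j)^2) (fun j _ => sq_nonneg _) (Finset.mem_univ i))
  calc ‖u‖^2 ≤ (Real.sqrt (∑ i, (u i)^2))^2 := by
        exact pow_le_pow_left₀ (norm_nonneg _) h1 2
    _ = ∑ i, (u i)^2 := Real.sq_sqrt hs

private lemma aux_integrable_gauss_poly {L : ℕ} (hL : 0 < L) {b : ℝ} (hb : 0 < b) :
    Integrable (fun u : Fin L → ℝ => (1 + ‖u‖^2) * Real.exp (-b * ‖u‖^2)) := by
  have hLpos : (0:ℝ) < L := Nat.cast_pos.mpr hL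
  have hc : 0 < b / L := div_pos hb hLpos
  apply (aux_integrable_prod hc).mono'
  · exact ((continuous_const.add ((continuous_norm).pow 2)).mul
      (Real.continuous_exp.comp (continuous_const.mul ((continuous_norm).pow 2)))).aestronglyMeasurable
  · refine Filter.Eventually.of_forall fun u => ?_
    have h1 : ‖u‖^2 ≤ ∑ i, (u i)^2 := aux_norm_sq_le_sum u
    have h2 : 1 + ∑ i, (u i)^2 ≤ ∏ i, (1 + (u i)^2) :=
      aux_one_add_sum_le_prod Finset.univ _ (fun i _ => sq_nonneg _)
    have h3 : ∑ i, (u i)^2 ≤ (L:ℝ) * ‖u‖^2 := by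
      calc ∑ i, (u i)^2 ≤ ∑ _i : Fin L, ‖u‖^2 := by
            refine Finset.sum_le_sum fun i _ => ?_
            have := norm_le_pi_norm u i
            have h0 : |u i| ≤ ‖u‖ := by simpa [Real.norm_eq_abs] using this
            calc (u i)^2 = |u i|^2 := (sq_abs _).symm
              _ ≤ ‖u‖^2 := pow_le_pow_left₀ (abs_nonneg _) h0 2
        _ = (L:ℝ) * ‖u‖^2 := by simp [Finset.sum_const, nsmul_eq_mul]
    have h4 : Real.exp (-b * ‖u‖^2) ≤ ∏ i, Real.exp (-(b/L) * (u i)^2) := by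
      rw [← Real.exp_sum]
      apply Real.exp_le_exp.2
      have : ∑ i, -(b/L) * (u i)^2 = -(b/L) * ∑ i, (u i)^2 := by rw [Finset.mul_sum]
      rw [this]
      rw [neg_mul, neg_mul, neg_le_neg_iff]
      calc b/L * ∑ i, (u i)^2 ≤ b/L * ((L:ℝ) * ‖u‖^2) := by
            exact mul_le_mul_of_nonneg_left h3 hc.le
        _ = b * ‖u‖^2 := by field_simp
    rw [Real.norm_eq_abs, abs_of_nonneg (by positivity)]
    calc (1 + ‖u‖^2) * Real.exp (-b * ‖u‖^2)
        ≤ (∏ i, (1 + (u i)^2)) * ∏ i, Real.exp (-(b/L) * (u i)^2) := by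
          refine mul_le_mul (le_trans (by linarith) h2) h4 (Real.exp_nonneg _) ?_
          exact Finset.prod_nonneg fun i _ => by positivity
      _ = ∏ i, ((1 + (u i)^2) * Real.exp (-(b/L) * (u i)^2)) := by
          rw [Finset.prod_mul_distrib]

private lemma aux_integrable_dom {L : ℕ} (hL : 0 < L) {b : ℝ} (hb : 0 < b)
    {f : (Fin L → ℝ) → ℝ} {M : ℝ} (hc : Continuous f)
    (hbd : ∀ u, |f u| ≤ M * ((1 + ‖u‖^2) * Real.exp (-b * ‖u‖^2))) :
    Integrable f :=
  ((aux_integrable_gauss_poly hL hb).const_mul M).mono' hc.aestronglyMeasurable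
    (Filter.Eventually.of_forall fun u => by simpa [Real.norm_eq_abs] using hbd u)

private lemma aux_quad_continuous {L : ℕ} (M : Matrix (Fin L) (Fin L) ℝ) :
    Continuous fun v : Fin L → ℝ => dotProduct v (M.mulVec v) := by
  simp only [dotProduct, Matrix.mulVec]
  exact continuous_finset_sum _ fun i _ => (continuous_apply i).mul
    (continuous_finset_sum _ fun j _ => continuous_const.mul (continuous_apply j))

private lemma aux_posdef_lb {L : ℕ} (hL : 0 < L) {M : Matrix (Fin L) (Fin L) ℝ} (hM : M.PosDef) :
    ∃ c : ℝ, 0 < c ∧ ∀ v : Fin L → ℝ, c * ‖v‖^2 ≤ dotProduct v (M.mulVec v) := by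
  haveI : Nonempty (Fin L) := Fin.pos_iff_nonempty.mp hL
  have hcont := aux_quad_continuous M
  have hne : (Metric.sphere (0 : Fin L → ℝ) 1).Nonempty := by
    refine ⟨fun _ => 1, ?_⟩
    simp [mem_sphere_iff_norm, pi_norm_const]
  obtain ⟨w, hwmem, hwmin⟩ := (isCompact_sphere (0 : Fin L → ℝ) 1).exists_isMinOn hne
    hcont.continuousOn
  have hwnorm : ‖w‖ = 1 := by simpa [mem_sphere_iff_norm] using hwmem
  have hw0 : w ≠ 0 := by
    intro h; rw [h, norm_zero] at hwnorm; norm_num at hwnorm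
  have hcpos : 0 < dotProduct w (M.mulVec w) := by
    have := hM.dotProduct_mulVec_pos hw0
    simpa using this
  refine ⟨_, hcpos, fun v => ?_⟩
  rcases eq_or_ne v 0 with rfl | hv
  · simp [Matrix.mulVec_zero]
  · have ha : 0 < ‖v‖ := norm_pos_iff.2 hv
    set a : ℝ := ‖v‖ with haa
    have hu : ‖a⁻¹ • v‖ = 1 := by
      rw [norm_smul, norm_inv, Real.norm_eq_abs, abs_of_pos ha]
      field_simp
      rfl
    have hmem : a⁻¹ • v ∈ Metric.sphere (0 : Fin L → ℝ) 1 := by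
      simp [mem_sphere_iff_norm, hu]
    have hmin : dotProduct w (M.mulVec w)
        ≤ dotProduct (a⁻¹ • v) (M.mulVec (a⁻¹ • v)) := hwmin hmem
    have hscale : dotProduct (a⁻¹ • v) (M.mulVec (a⁻¹ • v))
        = a⁻¹ * (a⁻¹ * dotProduct v (M.mulVec v)) := by
      rw [Matrix.mulVec_smul, smul_dotProduct, dotProduct_smul]
      simp [smul_eq_mul]
    rw [hscale] at hmin
    have ha2 : 0 < a^2 := by positivity
    have := mul_le_mul_of_nonneg_left hmin ha2.le
    calc dotProduct w (M.mulVec w) * ‖v‖^2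
        = a^2 * dotProduct w (M.mulVec w) := by rw [haa]; ring
      _ ≤ a^2 * (a⁻¹ * (a⁻¹ * dotProduct v (M.mulVec v))) := this
      _ = dotProduct v (M.mulVec v) := by field_simp


private lemma aux_B_transpose {K L : ℕ} (A : Matrix (Fin K) (Fin L) ℝ)
    {Γ : Matrix (Fin K) (Fin K) ℝ} (hΓ : Γ.PosDef) :
    ∀ i j, (Aᵀ * Γ⁻¹ * A) j i = (Aᵀ * Γ⁻¹ * A) i j := by
  have h1 : (Γ⁻¹)ᵀ = Γ⁻¹ := by
    have := hΓ.inv.isHermitian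
    rwa [Matrix.IsHermitian, Matrix.conjTranspose_eq_transpose_of_trivial] at this
  have h2 : (Aᵀ * Γ⁻¹ * A)ᵀ = Aᵀ * Γ⁻¹ * A := by
    rw [Matrix.transpose_mul, Matrix.transpose_mul, Matrix.transpose_transpose, h1,
      Matrix.mul_assoc]
  intro i j
  conv_rhs => rw [← h2]
  rfl

private lemma aux_B_psd {K L : ℕ} (A : Matrix (Fin K) (Fin L) ℝ)
    {Γ : Matrix (Fin K) (Fin K) ℝ} (hΓ : Γ.PosDef) :
    (Aᵀ * Γ⁻¹ * A).PosSemidef := by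
  have := hΓ.inv.posSemidef.conjTranspose_mul_mul_same A
  rwa [Matrix.conjTranspose_eq_transpose_of_trivial] at this

private lemma aux_lossPhi_nonneg {K L : ℕ} (A : Matrix (Fin K) (Fin L) ℝ)
    {Γ : Matrix (Fin K) (Fin K) ℝ} (hΓ : Γ.PosDef) (udag u : Fin L → ℝ) :
    0 ≤ lossPhi K L A Γ udag u := by
  have h := (aux_B_psd A hΓ).dotProduct_mulVec_nonneg (fun i => udag i - u i)
  have h2 : (0:ℝ) ≤ dotProduct (fun i => udag i - u i)
      ((Aᵀ * Γ⁻¹ * A).mulVec (fun i => udag i - u i)) := by simpa using h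
  unfold lossPhi
  linarith

private lemma aux_lossPhi_cont {K L : ℕ} (A : Matrix (Fin K) (Fin L) ℝ)
    (Γ : Matrix (Fin K) (Fin K) ℝ) (udag : Fin L → ℝ) :
    Continuous (lossPhi K L A Γ udag) := by
  unfold lossPhi
  simp only [dotProduct, Matrix.mulVec]
  apply continuous_const.mul
  exact continuous_finset_sum _ fun i _ =>
    ((continuous_const.sub (continuous_apply i)).mul
      (continuous_finset_sum _ fun j _ =>
        continuous_const.mul (continuous_const.sub (continuous_apply j))))

private lemma aux_lossPhi_bound {K L : ℕ} (A : Matrix (Fin K) (Fin L) ℝ)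
    (Γ : Matrix (Fin K) (Fin K) ℝ) (udag : Fin L → ℝ) :
    ∃ C : ℝ, 0 < C ∧ ∀ u, lossPhi K L A Γ udag u ≤ C * (1 + ‖u‖^2) := by
  set S := ∑ i, ∑ j, |(Aᵀ * Γ⁻¹ * A) i j| with hSdef
  have hS0 : 0 ≤ S := Finset.sum_nonneg fun i _ => Finset.sum_nonneg fun j _ => abs_nonneg _
  refine ⟨(S + 1) * (1 + ‖udag‖)^2, by positivity, fun u => ?_⟩
  set D := ‖udag‖ + ‖u‖ with hDdef
  have hD0 : (0:ℝ) ≤ D := by positivity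
  have hd : ∀ i, |udag i - u i| ≤ D := by
    intro i
    have h1 : |udag i| ≤ ‖udag‖ := by
      simpa [Real.norm_eq_abs] using norm_le_pi_norm udag i
    have h2 : |u i| ≤ ‖u‖ := by
      simpa [Real.norm_eq_abs] using norm_le_pi_norm u i
    calc |udag i - u i| ≤ |udag i| + |u i| := abs_sub _ _
      _ ≤ D := by rw [hDdef]; exact add_le_add h1 h2
  have key : dotProduct (fun i => udag i - u i)
      ((Aᵀ * Γ⁻¹ * A).mulVec (fun i => udag i - u i)) ≤ S * (D * D) := by
    simp only [dotProduct, Matrix.mulVec]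
    calc ∑ i, (udag i - u i) * ∑ j, (Aᵀ * Γ⁻¹ * A) i j * (udag j - u j)
        ≤ ∑ i, ∑ j, |(Aᵀ * Γ⁻¹ * A) i j| * (D * D) := by
          refine Finset.sum_le_sum fun i _ => ?_
          rw [Finset.mul_sum]
          refine Finset.sum_le_sum fun j _ => ?_
          calc (udag i - u i) * ((Aᵀ * Γ⁻¹ * A) i j * (udag j - u j))
              ≤ |(udag i - u i) * ((Aᵀ * Γ⁻¹ * A) i j * (udag j - u j))| := le_abs_self _
            _ = |udag i - u i| * |(Aᵀ * Γ⁻¹ * A) i j| * |udag j - u j| := by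
                rw [abs_mul, abs_mul]; ring
            _ ≤ D * |(Aᵀ * Γ⁻¹ * A) i j| * D := by
                apply mul_le_mul (mul_le_mul (hd i) le_rfl (abs_nonneg _) hD0) (hd j)
                  (abs_nonneg _) (by positivity)
            _ = |(Aᵀ * Γ⁻¹ * A) i j| * (D * D) := by ring
      _ = S * (D * D) := by
          rw [hSdef, Finset.sum_mul]
          exact Finset.sum_congr rfl fun i _ => (Finset.sum_mul _ _ _).symm
  unfold lossPhi
  have hfin : (1/2 : ℝ) * (S * (D * D)) ≤ (S + 1) * (1 + ‖udag‖)^2 * (1 + ‖u‖^2) := by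
    rw [hDdef]
    have ha := norm_nonneg udag
    have hx := norm_nonneg u
    nlinarith [sq_nonneg (‖udag‖ - ‖u‖), sq_nonneg (‖udag‖ + ‖u‖), sq_nonneg (‖udag‖ * ‖u‖),
      mul_nonneg ha hx, mul_nonneg hS0 (mul_nonneg ha hx),
      mul_nonneg hS0 (sq_nonneg (‖udag‖ - ‖u‖)), mul_nonneg hS0 (sq_nonneg (‖udag‖ * ‖u‖ - 1)),
      mul_nonneg hS0 (sq_nonneg ‖u‖), mul_nonneg hS0 (sq_nonneg ‖udag‖)]
  linarith [key]


private lemma aux_gauss_pos {L : ℕ} (u₀ : Fin L → ℝ) {Γ₀ : Matrix (Fin L) (Fin L) ℝ}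
    (hΓ₀ : Γ₀.PosDef) (u : Fin L → ℝ) : 0 < gaussDensity L u₀ Γ₀ u := by
  have hdet : 0 < Γ₀.det := hΓ₀.det_pos
  have h2π : (0:ℝ) < 2 * π := by positivity
  unfold gaussDensity
  have h1 : (0:ℝ) < (2 * π) ^ (-(L : ℝ) / 2) := Real.rpow_pos_of_pos h2π _
  have h2 : (0:ℝ) < Γ₀.det ^ (-(1:ℝ) / 2) := Real.rpow_pos_of_pos hdet _
  exact mul_pos (mul_pos h1 h2) (Real.exp_pos _)

private lemma aux_gauss_cont {L : ℕ} (u₀ : Fin L → ℝ) (Γ₀ : Matrix (Fin L) (Fin L) ℝ) :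
    Continuous (gaussDensity L u₀ Γ₀) := by
  unfold gaussDensity
  apply continuous_const.mul
  apply Real.continuous_exp.comp
  apply continuous_const.mul
  simp only [dotProduct, Matrix.mulVec]
  exact continuous_finset_sum _ fun i _ =>
    (((continuous_apply i).sub continuous_const).mul
      (continuous_finset_sum _ fun j _ =>
        continuous_const.mul ((continuous_apply j).sub continuous_const)))

private lemma aux_gauss_bound {L : ℕ} (hL : 0 < L) (u₀ : Fin L → ℝ)
    {Γ₀ : Matrix (Fin L) (Fin L) ℝ} (hΓ₀ : Γ₀.PosDef) :
    ∃ C₁ b : ℝ, 0 < C₁ ∧ 0 < b ∧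
      ∀ u, gaussDensity L u₀ Γ₀ u ≤ C₁ * Real.exp (-b * ‖u‖^2) := by
  obtain ⟨c, hc, hcle⟩ := aux_posdef_lb hL hΓ₀.inv
  have hdet : 0 < Γ₀.det := hΓ₀.det_pos
  have h2π : (0:ℝ) < 2 * π := by positivity
  set C₀ : ℝ := (2 * π) ^ (-(L : ℝ) / 2) * Γ₀.det ^ (-(1:ℝ) / 2) with hC₀
  have hC₀pos : 0 < C₀ := mul_pos (Real.rpow_pos_of_pos h2π _) (Real.rpow_pos_of_pos hdet _)
  refine ⟨C₀ * Real.exp (c / 2 * ‖u₀‖^2), c / 4, by positivity, by positivity, fun u => ?_⟩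
  have hveq : (fun i => u i - u₀ i) = u - u₀ := by funext i; simp
  have hkey := hcle (fun i => u i - u₀ i)
  have hnorm : ‖u‖^2 ≤ 2 * ‖(fun i => u i - u₀ i : Fin L → ℝ)‖^2 + 2 * ‖u₀‖^2 := by
    have h1 : ‖u‖ ≤ ‖(fun i => u i - u₀ i : Fin L → ℝ)‖ + ‖u₀‖ := by
      rw [hveq]
      calc ‖u‖ = ‖u - u₀ + u₀‖ := by rw [sub_add_cancel]
        _ ≤ ‖u - u₀‖ + ‖u₀‖ := norm_add_le _ _
    nlinarith [norm_nonneg u, norm_nonneg (u - u₀), norm_nonneg u₀,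
      sq_nonneg (‖(fun i => u i - u₀ i : Fin L → ℝ)‖ - ‖u₀‖)]
  have hexp : -(1/2) * dotProduct (fun i => u i - u₀ i)
      (Γ₀⁻¹.mulVec (fun i => u i - u₀ i)) ≤ c / 2 * ‖u₀‖^2 + -(c/4) * ‖u‖^2 := by
    nlinarith [hkey, norm_nonneg (fun i => u i - u₀ i : Fin L → ℝ)]
  unfold gaussDensity
  rw [← hC₀]
  calc C₀ * Real.exp (-(1/2) * dotProduct (fun i => u i - u₀ i)
        (Γ₀⁻¹.mulVec (fun i => u i - u₀ i)))
      ≤ C₀ * Real.exp (c / 2 * ‖u₀‖^2 + -(c/4) * ‖u‖^2) := by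
        exact mul_le_mul_of_nonneg_left (Real.exp_le_exp.2 hexp) hC₀pos.le
    _ = C₀ * Real.exp (c / 2 * ‖u₀‖^2) * Real.exp (-(c/4) * ‖u‖^2) := by
        rw [Real.exp_add]; ring


private lemma aux_algebra {L : ℕ} (w : (Fin L → ℝ) → ℝ) (B : Matrix (Fin L) (Fin L) ℝ)
    (udag : Fin L → ℝ) (φfn : (Fin L → ℝ) → ℝ)
    (hφdef : ∀ u, φfn u = (1 / 2) * dotProduct (fun i => udag i - u i)
      (B.mulVec (fun i => udag i - u i)))
    (Z : ℝ) (hZ : Z = ∫ u, w u) (hZpos : 0 < Z)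
    (hBsymm : ∀ i j, B j i = B i j)
    (hIw : Integrable w)
    (hquad : ∀ (c d : ℝ) (i j : Fin L), Integrable fun u => ((u i - c) * (u j - d)) * w u)
    (hlin : ∀ (c : ℝ) (i : Fin L), Integrable fun u => (u i - c) * w u)
    (hIx : ∀ i : Fin L, Integrable fun u => u i * w u)
    (ρ : (Fin L → ℝ) → ℝ) (hρ : ∀ u, ρ u = w u / Z) :
    ∫ u, φfn u * w u
      = Z * ((1 / 2) * Matrix.trace (densCov L ρ * B)
          + (1 / 2) * dotProduct (fun i => udag i - densMean L ρ i)
              (B.mulVec (fun i => udag i - densMean L ρ i))) := by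
  have hZne : Z ≠ 0 := ne_of_gt hZpos
  have hquad' : ∀ (i j : Fin L),
      Integrable fun u => ((udag i - u i) * (udag j - u j)) * w u := fun i j =>
    (hquad (udag i) (udag j) i j).congr (Filter.Eventually.of_forall fun u => by ring)
  have hmean : ∀ i, densMean L ρ i = (∫ u, u i * w u) / Z := by
    intro i
    simp only [densMean, hρ, ← mul_div_assoc]
    rw [integral_div]
  have hcent : ∀ i, ∫ u, (u i - densMean L ρ i) * w u = 0 := by
    intro i
    have h1 : ∀ u : Fin L → ℝ, (u i - densMean L ρ i) * w u
        = u i * w u - densMean L ρ i * w u := fun u => by ring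
    simp only [h1]
    rw [integral_sub (hIx i) (hIw.const_mul _), integral_const_mul, hmean i, ← hZ]
    field_simp
    ring
  have hcov : ∀ i j, densCov L ρ i j * Z
      = ∫ u, ((u i - densMean L ρ i) * (u j - densMean L ρ j)) * w u := by
    intro i j
    simp only [densCov, Matrix.of_apply, hρ, ← mul_div_assoc]
    rw [integral_div, div_mul_cancel₀ _ hZne]
  have hS : ∀ i j, (∫ u, ((udag i - u i) * (udag j - u j)) * w u)
      = Z * densCov L ρ i j
        + ((udag i - densMean L ρ i) * (udag j - densMean L ρ j)) * Z := by
    intro i j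
    have hpt : ∀ u : Fin L → ℝ, ((udag i - u i) * (udag j - u j)) * w u
        = ((u i - densMean L ρ i) * (u j - densMean L ρ j)) * w u
          - (udag j - densMean L ρ j) * ((u i - densMean L ρ i) * w u)
          - (udag i - densMean L ρ i) * ((u j - densMean L ρ j) * w u)
          + ((udag i - densMean L ρ i) * (udag j - densMean L ρ j)) * w u :=
      fun u => by ring
    simp only [hpt]
    have I1 : Integrable (fun u : Fin L → ℝ =>
        (u i - densMean L ρ i) * (u j - densMean L ρ j) * w u) := hquad _ _ i j
    have I2 : Integrable (fun u : Fin L → ℝ =>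
        (udag j - densMean L ρ j) * ((u i - densMean L ρ i) * w u)) :=
      (hlin _ i).const_mul _
    have I3 : Integrable (fun u : Fin L → ℝ =>
        (udag i - densMean L ρ i) * ((u j - densMean L ρ j) * w u)) :=
      (hlin _ j).const_mul _
    have I4 : Integrable (fun u : Fin L → ℝ =>
        (udag i - densMean L ρ i) * (udag j - densMean L ρ j) * w u) := hIw.const_mul _
    have I12 : Integrable (fun u : Fin L → ℝ =>
        (u i - densMean L ρ i) * (u j - densMean L ρ j) * w u
          - (udag j - densMean L ρ j) * ((u i - densMean L ρ i) * w u)) := I1.sub I2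
    have I123 : Integrable (fun u : Fin L → ℝ =>
        (u i - densMean L ρ i) * (u j - densMean L ρ j) * w u
          - (udag j - densMean L ρ j) * ((u i - densMean L ρ i) * w u)
          - (udag i - densMean L ρ i) * ((u j - densMean L ρ j) * w u)) := I12.sub I3
    rw [integral_add I123 I4, integral_sub I12 I3, integral_sub I1 I2,
        integral_const_mul, integral_const_mul, integral_const_mul,
        hcent i, hcent j, ← hZ, ← hcov i j]
    ring
  have htrace : Matrix.trace (densCov L ρ * B)
      = ∑ i, ∑ j, B i j * densCov L ρ i j := by
    simp only [Matrix.trace, Matrix.diag, Matrix.mul_apply]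
    exact Finset.sum_congr rfl fun i _ => Finset.sum_congr rfl fun j _ => by
      rw [hBsymm i j]; ring
  have hdots : dotProduct (fun i => udag i - densMean L ρ i)
        (B.mulVec (fun i => udag i - densMean L ρ i))
      = ∑ i, ∑ j, B i j * ((udag i - densMean L ρ i) * (udag j - densMean L ρ j)) := by
    simp only [dotProduct, Matrix.mulVec, Finset.mul_sum]
    exact Finset.sum_congr rfl fun i _ => Finset.sum_congr rfl fun j _ => by ring
  have hpt2 : ∀ u : Fin L → ℝ, φfn u * w u
      = ∑ i, ∑ j, ((1 / 2) * B i j) * (((udag i - u i) * (udag j - u j)) * w u) := by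
    intro u
    rw [hφdef u]
    simp only [dotProduct, Matrix.mulVec, Finset.mul_sum, Finset.sum_mul]
    exact Finset.sum_congr rfl fun i _ => Finset.sum_congr rfl fun j _ => by ring
  calc ∫ u, φfn u * w u
      = ∫ u, ∑ i, ∑ j, ((1 / 2) * B i j) * (((udag i - u i) * (udag j - u j)) * w u) := by
        simp only [hpt2]
    _ = ∑ i, ∑ j, ∫ u, ((1 / 2) * B i j) * (((udag i - u i) * (udag j - u j)) * w u) := by
        rw [integral_finset_sum _ fun i _ =>
          integrable_finset_sum _ fun j _ => (hquad' i j).const_mul _]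
        exact Finset.sum_congr rfl fun i _ =>
          integral_finset_sum _ fun j _ => (hquad' i j).const_mul _
    _ = ∑ i, ∑ j, ((1 / 2) * B i j) * ∫ u, ((udag i - u i) * (udag j - u j)) * w u := by
        simp only [integral_const_mul]
    _ = ∑ i, ∑ j, ((Z * (1 / 2)) * (B i j * densCov L ρ i j)
          + (Z * (1 / 2)) * (B i j * ((udag i - densMean L ρ i) * (udag j - densMean L ρ j)))) := by
        simp only [hS]
        exact Finset.sum_congr rfl fun i _ => Finset.sum_congr rfl fun j _ => by ring
    _ = (Z * (1 / 2)) * (∑ i, ∑ j, B i j * densCov L ρ i j)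
          + (Z * (1 / 2)) * (∑ i, ∑ j, B i j * ((udag i - densMean L ρ i) * (udag j - densMean L ρ j))) := by
        simp only [Finset.sum_add_distrib, ← Finset.mul_sum]
    _ = Z * ((1 / 2) * Matrix.trace (densCov L ρ * B)
          + (1 / 2) * dotProduct (fun i => udag i - densMean L ρ i)
              (B.mulVec (fun i => udag i - densMean L ρ i))) := by
        rw [htrace, hdots]; ring


/-- The normalization `Z` is differentiable on `[0,∞)` and for every
`t ≥ 0`,
`Z'(t) = Z(t) · (−½ Tr(Cov_{μ_t} Aᵀ Γ⁻¹ A) − ½ (u† − E_{μ_t})ᵀ Aᵀ Γ⁻¹ A (u† − E_{μ_t}))`,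
i.e. `Z'(t)/Z(t)` equals the stated expression. -/
theorem Z_log_derivative (K L : ℕ) (hK : 1 ≤ K) (hL : 1 ≤ L)
    (A : Matrix (Fin K) (Fin L) ℝ)
    (Γ : Matrix (Fin K) (Fin K) ℝ) (hΓ : Γ.PosDef)
    (Γ₀ : Matrix (Fin L) (Fin L) ℝ) (hΓ₀ : Γ₀.PosDef)
    (u₀ udag : Fin L → ℝ) :
    ∀ t : ℝ, 0 ≤ t →
      HasDerivWithinAt (ekiZ K L A Γ Γ₀ u₀ udag)
        (ekiZ K L A Γ Γ₀ u₀ udag t *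
          (-(1 / 2) * Matrix.trace (densCov L (ekiMu K L A Γ Γ₀ u₀ udag t) * Aᵀ * Γ⁻¹ * A)
           - (1 / 2) * dotProduct
               (fun i => udag i - densMean L (ekiMu K L A Γ Γ₀ u₀ udag t) i)
               ((Aᵀ * Γ⁻¹ * A).mulVec
                 (fun i => udag i - densMean L (ekiMu K L A Γ Γ₀ u₀ udag t) i))))
        (Ici (0:ℝ)) t := by
  intro t ht
  have hL0 : 0 < L := hL
  have hφcont := aux_lossPhi_cont A Γ udag
  have hgcont := aux_gauss_cont u₀ Γ₀
  have hφ0 : ∀ u, 0 ≤ lossPhi K L A Γ udag u := aux_lossPhi_nonneg A hΓ udag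
  obtain ⟨C, hC, hCle⟩ := aux_lossPhi_bound A Γ udag
  obtain ⟨C₁, b, hC₁, hb, hgle⟩ := aux_gauss_bound hL0 u₀ hΓ₀
  have hgpos := aux_gauss_pos u₀ hΓ₀
  have hMaster : ∀ f : (Fin L → ℝ) → ℝ, Continuous f → ∀ M : ℝ, 0 ≤ M →
      (∀ u, |f u| ≤ M * (1 + ‖u‖^2)) →
      Integrable fun u : Fin L → ℝ =>
        f u * (Real.exp (-t * lossPhi K L A Γ udag u) * gaussDensity L u₀ Γ₀ u) := by
    intro f hf M hM hfle
    apply aux_integrable_dom hL0 hb (M := M * C₁)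
    · exact hf.mul ((Real.continuous_exp.comp (continuous_const.mul hφcont)).mul hgcont)
    · intro u
      have hE1 : Real.exp (-t * lossPhi K L A Γ udag u) ≤ 1 := by
        apply Real.exp_le_one_iff.2
        have := hφ0 u
        nlinarith
      have hg1 := hgle u
      have hg2 := (hgpos u).le
      have hE0 := Real.exp_nonneg (-t * lossPhi K L A Γ udag u)
      have hEg : Real.exp (-t * lossPhi K L A Γ udag u) * gaussDensity L u₀ Γ₀ u
          ≤ C₁ * Real.exp (-b * ‖u‖^2) := by
        calc Real.exp (-t * lossPhi K L A Γ udag u) * gaussDensity L u₀ Γ₀ u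
            ≤ 1 * (C₁ * Real.exp (-b * ‖u‖^2)) := mul_le_mul hE1 hg1 hg2 one_pos.le
          _ = C₁ * Real.exp (-b * ‖u‖^2) := one_mul _
      rw [abs_mul, abs_of_nonneg (mul_nonneg hE0 hg2)]
      calc |f u| * (Real.exp (-t * lossPhi K L A Γ udag u) * gaussDensity L u₀ Γ₀ u)
          ≤ (M * (1 + ‖u‖^2)) * (C₁ * Real.exp (-b * ‖u‖^2)) :=
            mul_le_mul (hfle u) hEg (mul_nonneg hE0 hg2) (by positivity)
        _ = M * C₁ * ((1 + ‖u‖^2) * Real.exp (-b * ‖u‖^2)) := by ring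
  have hIw : Integrable (fun u : Fin L → ℝ =>
      Real.exp (-t * lossPhi K L A Γ udag u) * gaussDensity L u₀ Γ₀ u) := by
    have := hMaster (fun _ => 1) continuous_const 1 one_pos.le
      (fun u => by rw [abs_one]; nlinarith [sq_nonneg ‖u‖])
    simpa using this
  have habs : ∀ (c : ℝ) (i : Fin L), ∀ u : Fin L → ℝ, |u i - c| ≤ ‖u‖ + |c| := by
    intro c i u
    have h0 : |u i| ≤ ‖u‖ := by simpa [Real.norm_eq_abs] using norm_le_pi_norm u i
    calc |u i - c| ≤ |u i| + |c| := abs_sub _ _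
      _ ≤ ‖u‖ + |c| := by linarith
  have hquad : ∀ (c d : ℝ) (i j : Fin L), Integrable fun u : Fin L → ℝ =>
      ((u i - c) * (u j - d)) *
        (Real.exp (-t * lossPhi K L A Γ udag u) * gaussDensity L u₀ Γ₀ u) := by
    intro c d i j
    apply hMaster _ (((continuous_apply i).sub continuous_const).mul
      ((continuous_apply j).sub continuous_const)) ((1 + |c|) * (1 + |d|)) (by positivity)
    intro u
    calc |(u i - c) * (u j - d)| = |u i - c| * |u j - d| := abs_mul _ _
      _ ≤ (‖u‖ + |c|) * (‖u‖ + |d|) :=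
          mul_le_mul (habs c i u) (habs d j u) (abs_nonneg _) (by positivity)
      _ ≤ (1 + |c|) * (1 + |d|) * (1 + ‖u‖^2) := by
          nlinarith [norm_nonneg u, abs_nonneg c, abs_nonneg d, sq_nonneg (‖u‖ - 1),
            mul_nonneg (abs_nonneg c) (abs_nonneg d),
            mul_nonneg (abs_nonneg c) (norm_nonneg u),
            mul_nonneg (abs_nonneg d) (norm_nonneg u),
            mul_nonneg (mul_nonneg (abs_nonneg c) (abs_nonneg d)) (sq_nonneg ‖u‖),
            mul_nonneg (abs_nonneg c) (sq_nonneg (‖u‖ - 1)),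
            mul_nonneg (abs_nonneg d) (sq_nonneg (‖u‖ - 1))]
  have hlin : ∀ (c : ℝ) (i : Fin L), Integrable fun u : Fin L → ℝ =>
      (u i - c) * (Real.exp (-t * lossPhi K L A Γ udag u) * gaussDensity L u₀ Γ₀ u) := by
    intro c i
    apply hMaster _ ((continuous_apply i).sub continuous_const) (1 + |c|) (by positivity)
    intro u
    calc |u i - c| ≤ ‖u‖ + |c| := habs c i u
      _ ≤ (1 + |c|) * (1 + ‖u‖^2) := by
          nlinarith [norm_nonneg u, abs_nonneg c, sq_nonneg (‖u‖ - 1),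
            mul_nonneg (abs_nonneg c) (sq_nonneg ‖u‖)]
  have hIx : ∀ i : Fin L, Integrable fun u : Fin L → ℝ =>
      u i * (Real.exp (-t * lossPhi K L A Γ udag u) * gaussDensity L u₀ Γ₀ u) := by
    intro i
    apply hMaster _ (continuous_apply i) 1 one_pos.le
    intro u
    have h0 : |u i| ≤ ‖u‖ := by simpa [Real.norm_eq_abs] using norm_le_pi_norm u i
    nlinarith [sq_nonneg (‖u‖ - 1), norm_nonneg u]
  have hwpos : ∀ u : Fin L → ℝ,
      0 < Real.exp (-t * lossPhi K L A Γ udag u) * gaussDensity L u₀ Γ₀ u :=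
    fun u => mul_pos (Real.exp_pos _) (hgpos u)
  have hZpos : 0 < ekiZ K L A Γ Γ₀ u₀ udag t := by
    rw [show ekiZ K L A Γ Γ₀ u₀ udag t = ∫ u : Fin L → ℝ,
      Real.exp (-t * lossPhi K L A Γ udag u) * gaussDensity L u₀ Γ₀ u from rfl]
    rw [integral_pos_iff_support_of_nonneg (fun u => (hwpos u).le) hIw]
    have hsupp : Function.support (fun u : Fin L → ℝ =>
        Real.exp (-t * lossPhi K L A Γ udag u) * gaussDensity L u₀ Γ₀ u) = Set.univ := by
      rw [Set.eq_univ_iff_forall]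
      exact fun u => ne_of_gt (hwpos u)
    rw [hsupp]
    have hball : (0 : ENNReal) < volume (Metric.ball (0 : Fin L → ℝ) 1) :=
      Metric.measure_ball_pos _ _ one_pos
    exact hball.trans_le (measure_mono (Set.subset_univ _))
  -- derivative under the integral sign
  have hεpos : 0 < b / (2 * C) := by positivity
  have hmeas : ∀ᶠ s in nhds t, AEStronglyMeasurable
      (fun u : Fin L → ℝ =>
        Real.exp (-s * lossPhi K L A Γ udag u) * gaussDensity L u₀ Γ₀ u) volume :=
    Filter.Eventually.of_forall fun s =>
      ((Real.continuous_exp.comp (continuous_const.mul hφcont)).mul hgcont).aestronglyMeasurable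
  have hmeas' : AEStronglyMeasurable
      (fun u : Fin L → ℝ => -(lossPhi K L A Γ udag u *
        (Real.exp (-t * lossPhi K L A Γ udag u) * gaussDensity L u₀ Γ₀ u))) volume :=
    ((hφcont.mul ((Real.continuous_exp.comp (continuous_const.mul hφcont)).mul
      hgcont)).neg).aestronglyMeasurable
  have hbnd : ∀ᵐ u : Fin L → ℝ ∂volume, ∀ s ∈ Metric.ball t (b / (2 * C)),
      ‖-(lossPhi K L A Γ udag u *
        (Real.exp (-s * lossPhi K L A Γ udag u) * gaussDensity L u₀ Γ₀ u))‖
      ≤ (C * C₁ * Real.exp (b / 2)) * ((1 + ‖u‖^2) * Real.exp (-(b / 2) * ‖u‖^2)) := by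
    refine Filter.Eventually.of_forall fun u => fun s hs => ?_
    have hst : -s ≤ b / (2 * C) := by
      have h1 := Metric.mem_ball.1 hs
      rw [Real.dist_eq] at h1
      have h2 := abs_lt.1 h1
      linarith [ht, h2.1]
    have hE : Real.exp (-s * lossPhi K L A Γ udag u)
        ≤ Real.exp ((b / 2) * (1 + ‖u‖^2)) := by
      apply Real.exp_le_exp.2
      calc -s * lossPhi K L A Γ udag u ≤ (b / (2 * C)) * lossPhi K L A Γ udag u :=
            mul_le_mul_of_nonneg_right hst (hφ0 u)
        _ ≤ (b / (2 * C)) * (C * (1 + ‖u‖^2)) :=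
            mul_le_mul_of_nonneg_left (hCle u) hεpos.le
        _ = (b / 2) * (1 + ‖u‖^2) := by field_simp
    have hcomb : Real.exp ((b / 2) * (1 + ‖u‖^2)) * Real.exp (-b * ‖u‖^2)
        = Real.exp (b / 2) * Real.exp (-(b / 2) * ‖u‖^2) := by
      rw [← Real.exp_add, ← Real.exp_add]
      congr 1
      ring
    rw [Real.norm_eq_abs, abs_neg, abs_mul, abs_of_nonneg (hφ0 u),
      abs_of_nonneg (mul_nonneg (Real.exp_nonneg _) (hgpos u).le)]
    calc lossPhi K L A Γ udag u *
          (Real.exp (-s * lossPhi K L A Γ udag u) * gaussDensity L u₀ Γ₀ u)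
        ≤ (C * (1 + ‖u‖^2)) *
            (Real.exp ((b / 2) * (1 + ‖u‖^2)) * (C₁ * Real.exp (-b * ‖u‖^2))) := by
          apply mul_le_mul (hCle u)
            (mul_le_mul hE (hgle u) (hgpos u).le (Real.exp_nonneg _))
            (mul_nonneg (Real.exp_nonneg _) (hgpos u).le) (by positivity)
      _ = C * C₁ * (1 + ‖u‖^2) *
            (Real.exp ((b / 2) * (1 + ‖u‖^2)) * Real.exp (-b * ‖u‖^2)) := by ring
      _ = (C * C₁ * Real.exp (b / 2)) * ((1 + ‖u‖^2) * Real.exp (-(b / 2) * ‖u‖^2)) := by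
          rw [hcomb]; ring
  have hbint : Integrable (fun u : Fin L → ℝ =>
      (C * C₁ * Real.exp (b / 2)) * ((1 + ‖u‖^2) * Real.exp (-(b / 2) * ‖u‖^2))) :=
    (aux_integrable_gauss_poly hL0 (half_pos hb)).const_mul _
  have hdiff : ∀ᵐ u : Fin L → ℝ ∂volume, ∀ s ∈ Metric.ball t (b / (2 * C)),
      HasDerivAt (fun s : ℝ =>
          Real.exp (-s * lossPhi K L A Γ udag u) * gaussDensity L u₀ Γ₀ u)
        (-(lossPhi K L A Γ udag u *
          (Real.exp (-s * lossPhi K L A Γ udag u) * gaussDensity L u₀ Γ₀ u))) s := by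
    refine Filter.Eventually.of_forall fun u => fun s _ => ?_
    have h1 : HasDerivAt (fun s : ℝ => -s * lossPhi K L A Γ udag u)
        (-lossPhi K L A Γ udag u) s := by
      simpa using ((hasDerivAt_id s).neg.mul_const (lossPhi K L A Γ udag u))
    have h2 := (h1.exp).mul_const (gaussDensity L u₀ Γ₀ u)
    exact h2.congr_deriv (by ring)
  have hder := hasDerivAt_integral_of_dominated_loc_of_deriv_le (𝕜 := ℝ) (μ := volume)
    (F := fun (s : ℝ) (u : Fin L → ℝ) =>
      Real.exp (-s * lossPhi K L A Γ udag u) * gaussDensity L u₀ Γ₀ u)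
    (F' := fun (s : ℝ) (u : Fin L → ℝ) =>
      -(lossPhi K L A Γ udag u *
        (Real.exp (-s * lossPhi K L A Γ udag u) * gaussDensity L u₀ Γ₀ u)))
    (x₀ := t)
    (bound := fun u : Fin L → ℝ =>
      (C * C₁ * Real.exp (b / 2)) * ((1 + ‖u‖^2) * Real.exp (-(b / 2) * ‖u‖^2)))
    (Metric.ball_mem_nhds t hεpos) hmeas hIw hmeas' hbnd hbint hdiff
  obtain ⟨-, hderiv⟩ := hder
  beta_reduce at hderiv
  rw [integral_neg] at hderiv
  have halg := aux_algebra
    (w := fun u : Fin L → ℝ =>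
      Real.exp (-t * lossPhi K L A Γ udag u) * gaussDensity L u₀ Γ₀ u)
    (B := Aᵀ * Γ⁻¹ * A) (udag := udag) (φfn := lossPhi K L A Γ udag)
    (fun u => rfl) (ekiZ K L A Γ Γ₀ u₀ udag t) rfl hZpos (aux_B_transpose A hΓ)
    hIw hquad hlin hIx (ekiMu K L A Γ Γ₀ u₀ udag t) (fun u => rfl)
  beta_reduce at halg
  rw [halg] at hderiv
  have hassoc : densCov L (ekiMu K L A Γ Γ₀ u₀ udag t) * Aᵀ * Γ⁻¹ * A
      = densCov L (ekiMu K L A Γ Γ₀ u₀ udag t) * (Aᵀ * Γ⁻¹ * A) := by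
    simp only [Matrix.mul_assoc]
  rw [hassoc]
  have hval : ekiZ K L A Γ Γ₀ u₀ udag t *
      (-(1 / 2) * Matrix.trace (densCov L (ekiMu K L A Γ Γ₀ u₀ udag t) * (Aᵀ * Γ⁻¹ * A))
        - (1 / 2) * dotProduct
            (fun i => udag i - densMean L (ekiMu K L A Γ Γ₀ u₀ udag t) i)
            ((Aᵀ * Γ⁻¹ * A).mulVec
              (fun i => udag i - densMean L (ekiMu K L A Γ Γ₀ u₀ udag t) i)))
      = -(ekiZ K L A Γ Γ₀ u₀ udag t *
          ((1 / 2) * Matrix.trace (densCov L (ekiMu K L A Γ Γ₀ u₀ udag t) * (Aᵀ * Γ⁻¹ * A))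
            + (1 / 2) * dotProduct
                (fun i => udag i - densMean L (ekiMu K L A Γ Γ₀ u₀ udag t) i)
                ((Aᵀ * Γ⁻¹ * A).mulVec
                  (fun i => udag i - densMean L (ekiMu K L A Γ Γ₀ u₀ udag t) i)))) := by
    ring
  rw [hval]
  exact hderiv.hasDerivWithinAt


end
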